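/- arXiv:2503.00896 — 3 statements merged into one kernel-verified Lean document; each statement's English description precedes it below -/
import Mathlib

section
/- The number of (t, t+1)-core partitions with distinct parts equals the Fibonacci number F_{t+1}, where F_1 = F_2 = 1 and F_{n} = F_{n-1} + F_{n-2}. -/
/-- An integer partition, given by its (weakly decreasing, eventually zero)
sequence of parts, indexed from `0`. -/
structure IntPartition where
  parts : ℕ → ℕ
  antitone : ∀ i j, i ≤ j → parts j ≤ parts i
  finite : ∃ N, ∀ i, N ≤ i → parts i = 0

namespace IntPartition

/-- The size of a partition: the sum of its parts. -/
noncomputable def size (lam : IntPartition) : ℕ := ∑ᶠ i, lam.parts i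

/-- The parts of the conjugate partition: `conjParts lam j` is the number of
rows `i` with `lam.parts i > j` (rows and columns are `0`-indexed). -/
noncomputable def conjParts (lam : IntPartition) (j : ℕ) : ℕ :=
  Nat.card {i : ℕ | j < lam.parts i}

/-- A partition is self-conjugate if it equals its conjugate. -/
def IsSelfConjugate (lam : IntPartition) : Prop :=
  ∀ j, lam.conjParts j = lam.parts j

/-- `(i, j)` (both `0`-indexed) is a cell of the Young diagram of `lam`. -/
def IsCell (lam : IntPartition) (i j : ℕ) : Prop := j < lam.parts i

/-- The hook length of the cell `(i, j)` (both `0`-indexed): the number of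
cells directly to the right, plus the number directly below, plus one. -/
noncomputable def hook (lam : IntPartition) (i j : ℕ) : ℕ :=
  (lam.parts i - j) + (lam.conjParts j - i) - 1

/-- A partition is a `t`-core if no hook length is divisible by `t`. -/
def IsCore (lam : IntPartition) (t : ℕ) : Prop :=
  ∀ i j, lam.IsCell i j → ¬ (t ∣ lam.hook i j)

/-- The size of the Durfee square: the largest `k` such that the partition has
at least `k` parts of size at least `k`. -/
noncomputable def durfee (lam : IntPartition) : ℕ :=
  Nat.card {i : ℕ | i < lam.parts i}

/-- A partition has distinct parts if its (nonzero) parts are pairwise different. -/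
def DistinctParts (lam : IntPartition) : Prop :=
  ∀ i j, lam.parts i ≠ 0 → lam.parts j ≠ 0 → i ≠ j → lam.parts i ≠ lam.parts j

/-- The set of main diagonal hook lengths of `lam`. -/
noncomputable def MD (lam : IntPartition) : Set ℕ :=
  {h | ∃ i < lam.durfee, lam.hook i i = h}

/-- `lam ∈ DS(t)`: `lam` is a self-conjugate `(t, t+1)`-core partition whose
first `durfee lam` parts are pairwise distinct. -/
def InDS (lam : IntPartition) (t : ℕ) : Prop :=
  lam.IsSelfConjugate ∧ lam.IsCore t ∧ lam.IsCore (t + 1) ∧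
    ∀ i j, i < lam.durfee → j < lam.durfee → i ≠ j → lam.parts i ≠ lam.parts j

end IntPartition

namespace IntPartition

theorem ext' {lam mu : IntPartition} (h : lam.parts = mu.parts) : lam = mu := by
  cases lam; cases mu; simp_all

theorem lt_conjParts_iff (lam : IntPartition) (i j : ℕ) :
    i < lam.conjParts j ↔ j < lam.parts i := by
  obtain ⟨N, hN⟩ := lam.finite
  have hex : ∃ n, ¬ j < lam.parts n := ⟨N, by simp [hN N le_rfl]⟩
  have hset : {i : ℕ | j < lam.parts i} = Set.Iio (Nat.find hex) := by
    ext k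
    simp only [Set.mem_setOf_eq, Set.mem_Iio]
    constructor
    · intro hk
      by_contra h
      exact Nat.find_spec hex (lt_of_lt_of_le hk (lam.antitone _ _ (not_lt.mp h)))
    · intro hk
      exact not_not.mp (Nat.find_min hex hk)
  have : lam.conjParts j = Nat.find hex := by
    rw [conjParts, hset]
    simp [Nat.card_eq_card_toFinset]
  rw [this]
  constructor
  · intro h
    exact not_not.mp (Nat.find_min hex h)
  · intro h
    by_contra hcon
    exact Nat.find_spec hex (lt_of_lt_of_le h (lam.antitone _ _ (not_lt.mp hcon)))

theorem conjParts_le_iff (lam : IntPartition) (i j : ℕ) :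
    lam.conjParts j ≤ i ↔ lam.parts i ≤ j := by
  rw [← not_lt, lt_conjParts_iff, not_lt]

/-- step bound on conjugate parts for distinct partitions -/
theorem conjParts_step (lam : IntPartition) (hd : lam.DistinctParts) (j : ℕ) :
    lam.conjParts j ≤ lam.conjParts (j + 1) + 1 := by
  by_contra h
  push_neg at h
  set a := lam.conjParts (j + 1) with ha
  have h1 : j < lam.parts a := (lam.lt_conjParts_iff a j).mp (by omega)
  have h2 : j < lam.parts (a + 1) := (lam.lt_conjParts_iff (a+1) j).mp (by omega)
  have h3 : lam.parts a ≤ j + 1 := (lam.conjParts_le_iff a (j+1)).mp le_rfl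
  have h4 : lam.parts (a + 1) ≤ j + 1 := (lam.conjParts_le_iff (a+1) (j+1)).mp (by omega)
  exact hd a (a+1) (by omega) (by omega) (by omega) (by omega)

/-- hook lengths in row `0`, subtraction-free form -/
theorem hook_zero_eq (lam : IntPartition) (j : ℕ) (hj : j < lam.parts 0) :
    lam.hook 0 j + 1 + j = lam.parts 0 + lam.conjParts j := by
  have hc : 1 ≤ lam.conjParts j := by
    rw [Nat.one_le_iff_ne_zero, ← Nat.pos_iff_ne_zero]
    exact (lam.lt_conjParts_iff 0 j).mpr hj
  rw [hook]
  omega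

theorem hook_zero_lt (lam : IntPartition) (hd : lam.DistinctParts) (j : ℕ)
    (hj : j + 1 < lam.parts 0) :
    lam.hook 0 (j + 1) < lam.hook 0 j ∧ lam.hook 0 j ≤ lam.hook 0 (j + 1) + 2 := by
  have e1 := lam.hook_zero_eq j (by omega)
  have e2 := lam.hook_zero_eq (j + 1) hj
  have s := lam.conjParts_step hd j
  have m : lam.conjParts (j+1) ≤ lam.conjParts j := by
    rw [conjParts_le_iff]
    have := (lam.conjParts_le_iff (lam.conjParts j) j).mp le_rfl
    omega
  omega

theorem hook_zero_last (lam : IntPartition) (hd : lam.DistinctParts)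
    (hp : 0 < lam.parts 0) : lam.hook 0 (lam.parts 0 - 1) = 1 := by
  have e := lam.hook_zero_eq (lam.parts 0 - 1) (by omega)
  have h1 : 1 ≤ lam.conjParts (lam.parts 0 - 1) := by
    rw [Nat.one_le_iff_ne_zero, ← Nat.pos_iff_ne_zero, lt_conjParts_iff]; omega
  have h2 : lam.conjParts (lam.parts 0 - 1) ≤ 1 := by
    rw [conjParts_le_iff]
    by_contra h
    push_neg at h
    have hle : lam.parts 1 ≤ lam.parts 0 := lam.antitone 0 1 (by omega)
    exact hd 0 1 (by omega) (by omega) (by omega) (by omega)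
  omega

/-- the "hit" lemma: row-zero hooks, decreasing with steps ≤ 2 from `hook 0 0` to 1,
hit one of any two consecutive values. -/
theorem hook_hit (lam : IntPartition) (hd : lam.DistinctParts) (hp : 0 < lam.parts 0)
    (n : ℕ) (hn1 : 1 ≤ n) (hn2 : n + 1 ≤ lam.hook 0 0) :
    ∃ j < lam.parts 0, lam.hook 0 j = n ∨ lam.hook 0 j = n + 1 := by
  have hex : ∃ j, j < lam.parts 0 ∧ lam.hook 0 j ≤ n + 1 :=
    ⟨lam.parts 0 - 1, by omega, by rw [lam.hook_zero_last hd hp]; omega⟩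
  obtain ⟨hj0lt, hj0le⟩ := Nat.find_spec hex
  refine ⟨Nat.find hex, hj0lt, ?_⟩
  rcases Nat.eq_zero_or_pos (Nat.find hex) with h0 | h0
  · rw [h0] at hj0le ⊢
    omega
  · obtain ⟨k, hk⟩ : ∃ k, Nat.find hex = k + 1 := ⟨Nat.find hex - 1, by omega⟩
    have hmin := Nat.find_min hex (m := k) (by omega)
    push_neg at hmin
    have h2 := hmin (by omega)
    have hstep := (lam.hook_zero_lt hd k (by omega)).2
    rw [hk] at hj0le ⊢
    omega

theorem core_imp (lam : IntPartition) (t : ℕ) (ht : 1 ≤ t)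
    (h1 : lam.IsCore t) (h2 : lam.IsCore (t + 1)) (hd : lam.DistinctParts) :
    lam.parts 0 + lam.conjParts 0 ≤ t := by
  rcases Nat.eq_zero_or_pos (lam.parts 0) with h0 | h0
  · have : ¬ 0 < lam.conjParts 0 := by
      rw [lt_conjParts_iff]; omega
    omega
  have hb := lam.hook_zero_eq 0 h0
  by_contra hcon
  push_neg at hcon
  -- hook 0 0 ≥ t
  have hbt : t ≤ lam.hook 0 0 := by omega
  rcases eq_or_lt_of_le hbt with heq | hlt
  · exact h1 0 0 h0 ⟨1, by omega⟩
  · obtain ⟨j, hj, hor⟩ := lam.hook_hit hd h0 t ht (by omega)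
    rcases hor with h | h
    · exact h1 0 j hj ⟨1, by omega⟩
    · exact h2 0 j hj ⟨1, by omega⟩

theorem imp_core (lam : IntPartition) (s t : ℕ) (hts : t ≤ s)
    (hle : lam.parts 0 + lam.conjParts 0 ≤ t) : lam.IsCore s := by
  intro i j hcell hdvd
  have h1 : j < lam.parts i := hcell
  have h2 : i < lam.conjParts j := (lam.lt_conjParts_iff i j).mpr h1
  have h3 : lam.parts i ≤ lam.parts 0 := lam.antitone 0 i (Nat.zero_le i)
  have h4 : lam.conjParts j ≤ lam.conjParts 0 := by
    rcases Nat.eq_zero_or_pos j with h | h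
    · rw [h]
    · rw [← not_lt, lt_conjParts_iff]
      intro hcon
      have := (lam.lt_conjParts_iff (lam.conjParts 0) 0).mpr (by omega)
      omega
  have hpos : 1 ≤ lam.hook i j := by rw [hook]; omega
  have hub : lam.hook i j < s := by rw [hook]; omega
  have := Nat.le_of_dvd (by omega) hdvd
  omega

end IntPartition


def GoodList (t : ℕ) (l : List ℕ) : Prop :=
  l.Chain' (· > ·) ∧ (∀ x ∈ l, x ≠ 0) ∧ l.headD 0 + l.length ≤ t

def consEquiv (n : ℕ) :
    {l : List ℕ // GoodList (n+2) l ∧ ¬ (l.headD 0 + l.length ≤ n+1)} ≃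
    {l : List ℕ // GoodList n l} where
  toFun x := ⟨x.1.tail, by
    obtain ⟨l, ⟨hch, hne, hlen⟩, hq⟩ := x
    rcases l with _ | ⟨a, l'⟩
    · simp at hq
    · refine ⟨hch.tail, fun x hx => hne x (List.mem_cons_of_mem a hx), ?_⟩
      simp only [List.headD_cons, List.length_cons] at hlen hq
      rcases l' with _ | ⟨b, l''⟩
      · simp
      · have hab : a > b := List.rel_of_chain_cons hch
        simp only [List.tail_cons, List.headD_cons, List.length_cons]
        simp only [List.length_cons] at hlen hq
        omega⟩
  invFun y := ⟨(n + 1 - y.1.length) :: y.1, by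
    obtain ⟨l, hch, hne, hlen⟩ := y
    dsimp only
    have hlt : l.length ≤ n := by
      rcases l with _ | ⟨b, l''⟩
      · simp
      · have := hne b (List.mem_cons_self)
        simp only [List.headD_cons, List.length_cons] at hlen ⊢
        omega
    refine ⟨⟨?_, ?_, ?_⟩, ?_⟩
    · rw [List.Chain', List.isChain_cons]
      refine ⟨?_, hch⟩
      intro b hb
      rcases l with _ | ⟨c, l''⟩
      · simp at hb
      · simp only [List.head?_cons, Option.mem_some_iff] at hb
        subst hb
        simp only [List.headD_cons, List.length_cons] at hlen ⊢
        omega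
    · intro x hx
      rcases List.mem_cons.mp hx with h | h
      · omega
      · exact hne x h
    · simp only [List.headD_cons, List.length_cons]
      omega
    · simp only [List.headD_cons, List.length_cons]
      omega⟩
  left_inv x := by
    obtain ⟨l, ⟨hch, hne, hlen⟩, hq⟩ := x
    rcases l with _ | ⟨a, l'⟩
    · simp at hq
    · apply Subtype.ext
      simp only [List.tail_cons, List.cons.injEq, and_true]
      simp only [List.headD_cons, List.length_cons] at hlen hq
      omega
  right_inv y := by
    apply Subtype.ext
    rfl

theorem card_goodList : ∀ t : ℕ,
    Finite {l : List ℕ // GoodList t l} ∧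
      Nat.card {l : List ℕ // GoodList t l} = Nat.fib (t + 1) := by
  intro t
  induction t using Nat.strong_induction_on with
  | _ t ih =>
    match t with
    | 0 =>
      haveI : Unique {l : List ℕ // GoodList 0 l} :=
        { default := ⟨[], by simp [GoodList, List.Chain']⟩
          uniq := by
            rintro ⟨l, hch, hne, hlen⟩
            apply Subtype.ext
            rcases l with _ | ⟨a, l'⟩
            · rfl
            · have := hne a (List.mem_cons_self)
              simp only [List.headD_cons, List.length_cons] at hlen
              omega }
      exact ⟨inferInstance, by simp [Nat.card_unique]⟩
    | 1 =>
      haveI : Unique {l : List ℕ // GoodList 1 l} :=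
        { default := ⟨[], by simp [GoodList, List.Chain']⟩
          uniq := by
            rintro ⟨l, hch, hne, hlen⟩
            apply Subtype.ext
            rcases l with _ | ⟨a, l'⟩
            · rfl
            · have := hne a (List.mem_cons_self)
              simp only [List.headD_cons, List.length_cons] at hlen
              omega }
      exact ⟨inferInstance, by simp [Nat.card_unique]⟩
    | (n+2) =>
      obtain ⟨hf1, hc1⟩ := ih (n+1) (by omega)
      obtain ⟨hf0, hc0⟩ := ih n (by omega)
      have E1 : {x : {l : List ℕ // GoodList (n+2) l} //
          x.1.headD 0 + x.1.length ≤ n+1} ≃ {l : List ℕ // GoodList (n+1) l} :=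
        (Equiv.subtypeSubtypeEquivSubtypeInter (GoodList (n+2))
            (fun l => l.headD 0 + l.length ≤ n+1)).trans
          (Equiv.subtypeEquivRight (by
            intro l
            constructor
            · rintro ⟨⟨h1, h2, h3⟩, h4⟩
              exact ⟨h1, h2, h4⟩
            · rintro ⟨h1, h2, h3⟩
              exact ⟨⟨h1, h2, by omega⟩, h3⟩))
      have E2 : {x : {l : List ℕ // GoodList (n+2) l} //
          ¬ (x.1.headD 0 + x.1.length ≤ n+1)} ≃ {l : List ℕ // GoodList n l} :=
        (Equiv.subtypeSubtypeEquivSubtypeInter (GoodList (n+2))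
            (fun l => ¬ (l.headD 0 + l.length ≤ n+1))).trans (consEquiv n)
      have E : {l : List ℕ // GoodList (n+2) l} ≃
          {l : List ℕ // GoodList (n+1) l} ⊕ {l : List ℕ // GoodList n l} :=
        (Equiv.sumCompl (fun x : {l : List ℕ // GoodList (n+2) l} =>
          x.1.headD 0 + x.1.length ≤ n+1)).symm.trans (Equiv.sumCongr E1 E2)
      haveI := hf1
      haveI := hf0
      constructor
      · exact Finite.of_equiv _ E.symm
      · rw [Nat.card_congr E, Nat.card_sum, hc1, hc0]
        have h : Nat.fib (n + 2 + 1) = Nat.fib (n + 1) + Nat.fib (n + 1 + 1) :=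
          Nat.fib_add_two (n := n + 1)
        omega

noncomputable def ofList (l : List ℕ) (hch : l.Chain' (· > ·)) : IntPartition where
  parts i := l.getD i 0
  antitone := by
    intro i j hij
    show l.getD j 0 ≤ l.getD i 0
    rcases lt_or_ge j l.length with hj | hj
    · rcases eq_or_lt_of_le hij with rfl | hlt
      · exact le_rfl
      · have hp := (List.isChain_iff_pairwise).mp hch
        have := List.pairwise_iff_getElem.mp hp i j (by omega) hj hlt
        rw [List.getD_eq_getElem _ _ (by omega : i < l.length),
          List.getD_eq_getElem _ _ hj]
        omega
    · rw [List.getD_eq_default _ _ hj]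
      exact Nat.zero_le _
  finite := ⟨l.length, fun i hi => List.getD_eq_default _ _ hi⟩

@[simp] theorem ofList_parts (l : List ℕ) (hch : l.Chain' (· > ·)) (i : ℕ) :
    (ofList l hch).parts i = l.getD i 0 := rfl

theorem ofList_conjParts_zero (l : List ℕ) (hch : l.Chain' (· > ·))
    (hne : ∀ x ∈ l, x ≠ 0) : (ofList l hch).conjParts 0 = l.length := by
  apply le_antisymm
  · by_contra h
    push_neg at h
    have h1 := ((ofList l hch).lt_conjParts_iff l.length 0).mp h
    rw [ofList_parts, List.getD_eq_default _ _ le_rfl] at h1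
    omega
  · by_contra h
    push_neg at h
    have h1 : ¬ ((ofList l hch).conjParts 0 < (ofList l hch).conjParts 0) :=
      lt_irrefl _
    rw [IntPartition.lt_conjParts_iff, ofList_parts,
      List.getD_eq_getElem _ _ h] at h1
    exact h1 (Nat.pos_of_ne_zero (hne _ (List.getElem_mem h)))

theorem ofList_distinct (l : List ℕ) (hch : l.Chain' (· > ·)) :
    (ofList l hch).DistinctParts := by
  intro i j hi hj hij
  have hi' : i < l.length := by
    by_contra h
    exact hi (by rw [ofList_parts]; exact List.getD_eq_default _ _ (not_lt.mp h))
  have hj' : j < l.length := by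
    by_contra h
    exact hj (by rw [ofList_parts]; exact List.getD_eq_default _ _ (not_lt.mp h))
  have hp := List.pairwise_iff_getElem.mp ((List.isChain_iff_pairwise).mp hch)
  rw [ofList_parts, ofList_parts, List.getD_eq_getElem _ _ hi',
    List.getD_eq_getElem _ _ hj']
  rcases Nat.lt_or_ge i j with h | h
  · exact Nat.ne_of_gt (hp i j hi' hj' h)
  · exact Nat.ne_of_lt (hp j i hj' hi' (by omega))

noncomputable def toList (lam : IntPartition) : List ℕ :=
  (List.range (lam.conjParts 0)).map lam.parts

@[simp] theorem toList_length (lam : IntPartition) :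
    (toList lam).length = lam.conjParts 0 := by
  simp [toList]

theorem toList_getElem (lam : IntPartition) (i : ℕ) (hi : i < (toList lam).length) :
    (toList lam)[i] = lam.parts i := by
  simp [toList]

theorem toList_chain' (lam : IntPartition) (hd : lam.DistinctParts) :
    (toList lam).Chain' (· > ·) := by
  rw [List.Chain', List.isChain_iff_pairwise, List.pairwise_iff_getElem]
  intro i j hi hj hij
  rw [toList_getElem _ _ hi, toList_getElem _ _ hj]
  rw [toList_length] at hi hj
  have h1 : 0 < lam.parts i := (lam.lt_conjParts_iff i 0).mp hi
  have h2 : 0 < lam.parts j := (lam.lt_conjParts_iff j 0).mp hj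
  have hle : lam.parts j ≤ lam.parts i := lam.antitone i j (by omega)
  have hne := hd i j (by omega) (by omega) (by omega)
  omega

theorem toList_headD (lam : IntPartition) : (toList lam).headD 0 ≤ lam.parts 0 := by
  have hg : ∀ L : List ℕ, L.headD 0 = L.getD 0 0 := by
    intro L; cases L <;> rfl
  rw [hg]
  rcases Nat.lt_or_ge 0 (toList lam).length with h | h
  · rw [List.getD_eq_getElem _ _ h, toList_getElem _ _ h]
  · rw [List.getD_eq_default _ _ h]
    exact Nat.zero_le _

theorem toList_goodList (lam : IntPartition) (hd : lam.DistinctParts) (t : ℕ)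
    (hle : lam.parts 0 + lam.conjParts 0 ≤ t) : GoodList t (toList lam) := by
  refine ⟨toList_chain' lam hd, ?_, ?_⟩
  · intro x hx
    rw [toList] at hx
    obtain ⟨i, hi, rfl⟩ := List.mem_map.mp hx
    rw [List.mem_range] at hi
    have := (lam.lt_conjParts_iff i 0).mp hi
    omega
  · have h1 := toList_headD lam
    rw [toList_length]
    omega

theorem headD_eq_getD (L : List ℕ) : L.headD 0 = L.getD 0 0 := by
  cases L <;> rfl

/-- The number of `(t, t+1)`-core partitions with distinct parts equals the
Fibonacci number `F_{t+1}` (with `F_1 = F_2 = 1`). -/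
theorem card_core_distinct_eq_fib (t : ℕ) (ht : 1 ≤ t) :
    Nat.card {lam : IntPartition //
      lam.IsCore t ∧ lam.IsCore (t + 1) ∧ lam.DistinctParts} = Nat.fib (t + 1) := by
  have E : {lam : IntPartition // lam.IsCore t ∧ lam.IsCore (t + 1) ∧ lam.DistinctParts} ≃
      {l : List ℕ // GoodList t l} :=
    { toFun := fun x => ⟨toList x.1, by
        obtain ⟨lam, h1, h2, hd⟩ := x
        exact toList_goodList lam hd t (lam.core_imp t ht h1 h2 hd)⟩
      invFun := fun y => ⟨ofList y.1 y.2.1, by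
        have hd := ofList_distinct y.1 y.2.1
        have hle : (ofList y.1 y.2.1).parts 0 + (ofList y.1 y.2.1).conjParts 0 ≤ t := by
          rw [ofList_conjParts_zero y.1 y.2.1 y.2.2.1, ofList_parts, ← headD_eq_getD]
          exact y.2.2.2
        exact ⟨(ofList y.1 y.2.1).imp_core t t le_rfl hle,
          (ofList y.1 y.2.1).imp_core (t + 1) t (by omega) hle, hd⟩⟩
      left_inv := fun x => by
        apply Subtype.ext
        apply IntPartition.ext'
        funext i
        show (toList x.1).getD i 0 = x.1.parts i
        rcases Nat.lt_or_ge i (toList x.1).length with h | h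
        · rw [List.getD_eq_getElem _ _ h, toList_getElem _ _ h]
        · rw [List.getD_eq_default _ _ h]
          rw [toList_length] at h
          have := (x.1.conjParts_le_iff i 0).mp h
          omega
      right_inv := fun y => by
        apply Subtype.ext
        have hlen' : (toList (ofList y.1 y.2.1)).length = y.1.length := by
          rw [toList_length, ofList_conjParts_zero y.1 y.2.1 y.2.2.1]
        apply List.ext_getElem hlen'
        intro i hi1 hi2
        rw [toList_getElem _ _ hi1, ofList_parts, List.getD_eq_getElem _ _ hi2] }
  rw [Nat.card_congr E]
  exact (card_goodList t).2
end

section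
/- Let t ≥ 1 and let λ be a self-conjugate (t, t+1)-core partition whose first s(λ) parts are pairwise distinct, where s(λ) is the Durfee square size. Then every main diagonal hook length h of λ satisfies h ≤ 2t − 1. -/
lemma initialSeg' {S : Set ℕ} (hS : S.Finite)
    (hdc : ∀ a b : ℕ, a ≤ b → b ∈ S → a ∈ S) :
    ∀ k, k ∈ S ↔ k < Nat.card S := by
  have hne : Sᶜ.Nonempty := hS.infinite_compl.nonempty
  set n0 := sInf Sᶜ with hn0
  have hn0mem : n0 ∈ Sᶜ := Nat.sInf_mem hne
  have hiff : ∀ m, m ∈ S ↔ m < n0 := by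
    intro m
    constructor
    · intro hm
      by_contra hlt
      push_neg at hlt
      exact hn0mem (hdc n0 m hlt hm)
    · intro hm
      by_contra hm'
      exact absurd (Nat.sInf_le hm') (not_le.mpr hm)
  have hset : S = Set.Iio n0 := Set.ext hiff
  have hcard : Nat.card S = n0 := by rw [hset]; simp
  rw [hcard]
  exact hiff

lemma conjParts_iff' (lam : IntPartition) (j k : ℕ) :
    j < lam.parts k ↔ k < lam.conjParts j := by
  have hfin : {k : ℕ | j < lam.parts k}.Finite := by
    obtain ⟨N, hN⟩ := lam.finite
    apply Set.Finite.subset (Set.finite_Iio N)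
    intro k hk
    simp only [Set.mem_setOf_eq] at hk
    by_contra hc
    simp only [Set.mem_Iio, not_lt] at hc
    rw [hN k hc] at hk
    omega
  exact initialSeg' hfin
    (fun a b hab hb => lt_of_lt_of_le hb (lam.antitone a b hab)) k

lemma durfee_iff' (lam : IntPartition) (i : ℕ) :
    i < lam.parts i ↔ i < lam.durfee := by
  have hfin : {i : ℕ | i < lam.parts i}.Finite := by
    obtain ⟨N, hN⟩ := lam.finite
    apply Set.Finite.subset (Set.finite_Iio N)
    intro k hk
    simp only [Set.mem_setOf_eq] at hk
    by_contra hc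
    simp only [Set.mem_Iio, not_lt] at hc
    rw [hN k hc] at hk
    omega
  refine initialSeg' hfin (fun a b hab hb => ?_) i
  have := lam.antitone a b hab
  simp only [Set.mem_setOf_eq] at *
  omega

lemma parts_zero_le (t : ℕ) (ht : 1 ≤ t) (lam : IntPartition)
    (hsc : lam.IsSelfConjugate) (hct : lam.IsCore t) (hct1 : lam.IsCore (t + 1))
    (hdist : ∀ i j, i < lam.durfee → j < lam.durfee → i ≠ j →
      lam.parts i ≠ lam.parts j) :
    lam.parts 0 ≤ t := by
  classical
  by_contra hcon
  push_neg at hcon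
  -- hcon : t < lam.parts 0
  have hconj := conjParts_iff' lam
  have hdur := durfee_iff' lam
  have hfval : ∀ j, lam.hook 0 j = (lam.parts 0 - j) + lam.conjParts j - 1 := by
    intro j
    simp [IntPartition.hook]
  have hne : ∀ j, j < lam.parts 0 → lam.hook 0 j ≠ t ∧ lam.hook 0 j ≠ t + 1 := by
    intro j hj
    constructor
    · intro he
      exact hct 0 j hj (he ▸ dvd_refl t)
    · intro he
      exact hct1 0 j hj (he ▸ dvd_refl (t + 1))
  have hcpos : ∀ j, j < lam.parts 0 → 1 ≤ lam.conjParts j := by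
    intro j hj
    exact (hconj j 0).mp hj
  -- conjParts (p0 - 1) = 1
  have hclast : lam.conjParts (lam.parts 0 - 1) = 1 := by
    have h1 : 1 ≤ lam.conjParts (lam.parts 0 - 1) := hcpos _ (by omega)
    by_contra hc
    have h2 : 1 < lam.conjParts (lam.parts 0 - 1) := by omega
    have h3 : lam.parts 0 - 1 < lam.parts 1 := (hconj _ 1).mpr h2
    have h4 : lam.parts 1 ≤ lam.parts 0 := lam.antitone 0 1 (by omega)
    have h5 : lam.parts 1 = lam.parts 0 := by omega
    have hd0 : 0 < lam.durfee := (hdur 0).mp (by omega)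
    have hd1 : 1 < lam.durfee := (hdur 1).mp (by omega)
    exact hdist 0 1 hd0 hd1 (by omega) h5.symm
  have hPex : ∃ j, j < lam.parts 0 ∧ lam.hook 0 j ≤ t := by
    refine ⟨lam.parts 0 - 1, by omega, ?_⟩
    rw [hfval, hclast]
    omega
  obtain ⟨j', ⟨hj'lt, hj'le⟩, hmin⟩ :
      ∃ j', (j' < lam.parts 0 ∧ lam.hook 0 j' ≤ t) ∧
        ∀ m, m < j' → ¬(m < lam.parts 0 ∧ lam.hook 0 m ≤ t) :=
    ⟨Nat.find hPex, Nat.find_spec hPex, fun m hm => Nat.find_min hPex hm⟩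
  have hc0 : lam.conjParts 0 = lam.parts 0 := hsc 0
  have hj'pos : 0 < j' := by
    rcases Nat.eq_zero_or_pos j' with h0 | h
    · exfalso
      rw [h0, hfval 0, hc0] at hj'le
      omega
    · exact h
  obtain ⟨j0, rfl⟩ : ∃ j0, j' = j0 + 1 := ⟨j' - 1, by omega⟩
  have hj0lt : j0 < lam.parts 0 := by omega
  have hfj0 : t + 1 ≤ lam.hook 0 j0 := by
    by_contra hc
    exact hmin j0 (by omega) ⟨hj0lt, by omega⟩
  rcases eq_or_lt_of_le hfj0 with heq | hgt
  · exact (hne j0 hj0lt).2 heq.symm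
  rcases eq_or_lt_of_le hj'le with heq | hlt'
  · exact (hne (j0 + 1) hj'lt).1 heq
  -- now hook 0 j0 ≥ t+2, hook 0 (j0+1) ≤ t-1
  have e1 := hfval j0
  have e2 := hfval (j0 + 1)
  have hcj0pos := hcpos j0 hj0lt
  have hcj'pos := hcpos (j0 + 1) hj'lt
  set k0 := lam.conjParts (j0 + 1) with hk0def
  have hcj0 : k0 + 2 ≤ lam.conjParts j0 := by omega
  have hk0le : k0 ≤ j0 := by omega
  have hpk0a : lam.parts k0 ≤ j0 + 1 := by
    by_contra hc
    push_neg at hc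
    have := (hconj (j0 + 1) k0).mp hc
    omega
  have hpk0b : j0 < lam.parts k0 := (hconj j0 k0).mpr (by omega)
  have hpk0 : lam.parts k0 = j0 + 1 := by omega
  have hpk1b : j0 < lam.parts (k0 + 1) := (hconj j0 (k0 + 1)).mpr (by omega)
  have hpk1a : lam.parts (k0 + 1) ≤ lam.parts k0 := lam.antitone k0 (k0 + 1) (by omega)
  have hpk1 : lam.parts (k0 + 1) = j0 + 1 := by omega
  rcases eq_or_lt_of_le hk0le with heq | hlt
  · -- k0 = j0 : contradiction with self-conjugacy
    have h1 : k0 + 1 < lam.conjParts k0 := (hconj k0 (k0 + 1)).mp (by omega)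
    have h2 : lam.conjParts k0 = lam.parts k0 := hsc k0
    omega
  · -- k0 < j0 : contradiction with distinctness
    have hd0 : k0 < lam.durfee := (hdur k0).mp (by omega)
    have hd1 : k0 + 1 < lam.durfee := (hdur (k0 + 1)).mp (by omega)
    exact hdist k0 (k0 + 1) hd0 hd1 (by omega) (by omega)

/-- If `lam ∈ DS(t)`, then every main diagonal hook length of `lam` is at most
`2t - 1`. -/
theorem md_le_of_inDS (t : ℕ) (ht : 1 ≤ t) (lam : IntPartition)
    (hlam : lam.InDS t) :
    ∀ h ∈ lam.MD, h ≤ 2 * t - 1 := by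
  obtain ⟨hsc, hct, hct1, hdist⟩ := hlam
  intro h hh
  obtain ⟨i, hid, hhook⟩ := hh
  have hpi : i < lam.parts i := (durfee_iff' lam i).mpr hid
  have hp0 : lam.parts 0 ≤ t := parts_zero_le t ht lam hsc hct hct1 hdist
  have hple : lam.parts i ≤ lam.parts 0 := lam.antitone 0 i (Nat.zero_le i)
  subst hhook
  unfold IntPartition.hook
  rw [hsc i]
  omega
end

section
/- Let t ≥ 1 and Q_t = {1, 3, 5, ..., 2t−1} \ {t, t+1}. A self-conjugate partition λ lies in DS(t) if and only if its set MD(λ) of main diagonal hook lengths satisfies: (i) MD(λ) ⊆ Q_t; (ii) any two distinct elements of MD(λ) differ by at least 4; (iii) no two elements h1, h2 of MD(λ) satisfy h1 + h2 = 2t or h1 + h2 = 2t + 2. -/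
lemma natCard_Iio (n : ℕ) : Nat.card (Set.Iio n) = n := by
  have h : (Set.Iio n) = ↑(Finset.range n) := by ext x; simp
  rw [h, Nat.card_coe_set_eq, Set.ncard_coe_finset, Finset.card_range]

lemma natCard_Iic (n : ℕ) : Nat.card (Set.Iic n) = n + 1 := by
  have h : (Set.Iic n) = ↑(Finset.range (n+1)) := by
    ext x; simp [Nat.lt_succ_iff]
  rw [h, Nat.card_coe_set_eq, Set.ncard_coe_finset, Finset.card_range]

lemma card_lower (S : Set ℕ) (N : ℕ)
    (hdc : ∀ i j : ℕ, i ≤ j → j ∈ S → i ∈ S) (hb : ∀ i ∈ S, i < N) :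
    ∀ i, i ∈ S ↔ i < Nat.card S := by
  have hfin : S.Finite := (Set.finite_Iio N).subset fun i hi => hb i hi
  have hcard : Nat.card S = S.ncard := Nat.card_coe_set_eq S
  intro i
  constructor
  · intro hi
    have h1 : Set.Iic i ⊆ S := fun j hj => hdc j i hj hi
    have h2 := Set.ncard_le_ncard h1 hfin
    have h3 : (Set.Iic i).ncard = i + 1 := by
      rw [← Nat.card_coe_set_eq, natCard_Iic]
    omega
  · intro hi
    by_contra hns
    have h2 : S ⊆ Set.Iio i := fun j hj => by
      by_contra hji
      simp only [Set.mem_Iio, not_lt] at hji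
      exact hns (hdc i j hji hj)
    have h3 := Set.ncard_le_ncard h2 (Set.finite_Iio i)
    have h4 : (Set.Iio i).ncard = i := by
      rw [← Nat.card_coe_set_eq, natCard_Iio]
    omega

lemma IntPartition.lt_conjParts_iff' (lam : IntPartition) (j i : ℕ) :
    i < lam.conjParts j ↔ j < lam.parts i := by
  obtain ⟨N, hN⟩ := lam.finite
  exact (card_lower {i | j < lam.parts i} N
    (fun i' i'' h hmem => lt_of_lt_of_le hmem (lam.antitone i' i'' h))
    (fun i hi => by
      by_contra h
      have := hN i (by omega)
      simp only [Set.mem_setOf_eq] at hi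
      omega) i).symm

lemma IntPartition.lt_durfee_iff' (lam : IntPartition) (i : ℕ) :
    i < lam.durfee ↔ i < lam.parts i := by
  obtain ⟨N, hN⟩ := lam.finite
  exact (card_lower {i | i < lam.parts i} N
    (fun i' i'' h hmem => by
      simp only [Set.mem_setOf_eq] at *
      have := lam.antitone i' i'' h
      omega)
    (fun i hi => by
      by_contra h
      have := hN i (by omega)
      simp only [Set.mem_setOf_eq] at hi
      omega) i).symm

lemma IntPartition.conjParts_eq (lam : IntPartition) (j w : ℕ)
    (h : ∀ i, j < lam.parts i ↔ i < w) : lam.conjParts j = w := by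
  have hset : {i : ℕ | j < lam.parts i} = Set.Iio w := by
    ext i; simpa using h i
  rw [IntPartition.conjParts, hset, natCard_Iio]

/-- Characterization of `DS(t)`: a self-conjugate partition `lam` lies in `DS(t)`
iff `MD lam ⊆ Q_t = {1, 3, …, 2t-1} \ {t, t+1}`, any two distinct elements of
`MD lam` differ by at least `4`, and no two elements of `MD lam` sum to `2t`
or `2t + 2`. -/
theorem inDS_iff (t : ℕ) (ht : 1 ≤ t) (lam : IntPartition)
    (hsc : lam.IsSelfConjugate) :
    lam.InDS t ↔
      (lam.MD ⊆ {h : ℕ | Odd h ∧ h ≤ 2 * t - 1 ∧ h ≠ t ∧ h ≠ t + 1} ∧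
        (∀ h₁ ∈ lam.MD, ∀ h₂ ∈ lam.MD, h₂ < h₁ → 4 ≤ h₁ - h₂) ∧
        ∀ h₁ ∈ lam.MD, ∀ h₂ ∈ lam.MD, h₁ + h₂ ≠ 2 * t ∧ h₁ + h₂ ≠ 2 * t + 2) := by
  obtain ⟨N, hN⟩ := lam.finite
  have hrel : ∀ i j : ℕ, j < lam.parts i ↔ i < lam.parts j := by
    intro i j
    rw [← hsc j]
    exact (lam.lt_conjParts_iff' j i).symm
  have hdur : ∀ i, i < lam.durfee ↔ i < lam.parts i := lam.lt_durfee_iff'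
  have hps : ∀ i, lam.durfee ≤ i → lam.parts i ≤ lam.durfee := by
    intro i hi
    have h1 : lam.parts i ≤ lam.parts lam.durfee := lam.antitone _ _ hi
    have h2 : ¬ lam.durfee < lam.parts lam.durfee := by
      intro h
      exact absurd ((hdur _).mpr h) (lt_irrefl _)
    omega
  have hges : ∀ i, i < lam.durfee → lam.durfee ≤ lam.parts i := by
    intro i hi
    have h0 : lam.durfee - 1 < lam.parts (lam.durfee - 1) := (hdur _).mp (by omega)
    have h1 : lam.parts (lam.durfee - 1) ≤ lam.parts i := lam.antitone _ _ (by omega)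
    omega
  have hookgen : ∀ i j, j < lam.parts i →
      lam.hook i j + (i + j + 1) = lam.parts i + lam.parts j := by
    intro i j hij
    have hji : i < lam.parts j := (hrel i j).mp hij
    have hdef : lam.hook i j = (lam.parts i - j) + (lam.conjParts j - i) - 1 := rfl
    rw [hsc j] at hdef
    omega
  have hchain : ∀ d i, i + d < lam.durfee →
      (lam.parts (i + d) - (i + d)) + d ≤ lam.parts i - i := by
    intro d
    induction d with
    | zero => intro i _; simp
    | succ d ih =>
      intro i h
      have h1 := ih (i + 1) (by omega)
      have h2 : lam.parts (i + 1) ≤ lam.parts i := lam.antitone i (i + 1) (by omega)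
      have h3 : i + 1 < lam.parts (i + 1) := (hdur (i + 1)).mp (by omega)
      have h4 : i + 1 + d = i + (d + 1) := by omega
      rw [h4] at h1
      omega
  have hmono_a : ∀ i j, i ≤ j → j < lam.durfee →
      (lam.parts j - j) + (j - i) ≤ lam.parts i - i := by
    intro i j hij hjs
    have h := hchain (j - i) i (by omega)
    have h4 : i + (j - i) = j := by omega
    rw [h4] at h
    omega
  have hdiag : ∀ i, i < lam.durfee →
      lam.hook i i + (2 * i + 1) = 2 * lam.parts i := by
    intro i hi
    have := hookgen i i ((hdur i).mp hi)
    omega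
  have hMDmem : ∀ i, i < lam.durfee → lam.hook i i ∈ lam.MD :=
    fun i hi => ⟨i, hi, rfl⟩
  -- existence of a column beyond the Durfee square with prescribed `j - parts j`
  have hmiss : ∀ c : ℕ, (∀ k, k < lam.durfee → lam.parts k - k ≠ c + 1) →
      ∃ j, lam.durfee ≤ j ∧ lam.parts j + c = j := by
    intro c hc
    have hdcS : ∀ i j : ℕ, i ≤ j →
        j ∈ {k : ℕ | k < lam.parts k ∧ c + 2 ≤ lam.parts k - k} →
        i ∈ {k : ℕ | k < lam.parts k ∧ c + 2 ≤ lam.parts k - k} := by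
      intro i j hij hj
      simp only [Set.mem_setOf_eq] at hj ⊢
      have h2 : lam.parts j ≤ lam.parts i := lam.antitone i j hij
      have hjs : j < lam.durfee := (hdur j).mpr hj.1
      have h3 := hmono_a i j hij hjs
      omega
    have hbS : ∀ k ∈ {k : ℕ | k < lam.parts k ∧ c + 2 ≤ lam.parts k - k}, k < N := by
      intro k hk
      simp only [Set.mem_setOf_eq] at hk
      by_contra hcon
      have := hN k (by omega)
      omega
    obtain ⟨w, hSiff⟩ : ∃ w : ℕ, ∀ i : ℕ,
        (i < lam.parts i ∧ c + 2 ≤ lam.parts i - i) ↔ i < w :=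
      ⟨_, fun i => card_lower {k : ℕ | k < lam.parts k ∧ c + 2 ≤ lam.parts k - k}
        N hdcS hbS i⟩
    have hwle : w ≤ lam.durfee := by
      rcases Nat.eq_zero_or_pos w with h | h
      · omega
      · have h1 := (hSiff (w - 1)).mpr (by omega)
        have := (hdur (w - 1)).mpr h1.1
        omega
    have haw : w < lam.durfee → lam.parts w - w ≤ c := by
      intro hwd
      have h2 : ¬ (w < lam.parts w ∧ c + 2 ≤ lam.parts w - w) := by
        intro hh
        exact absurd ((hSiff w).mp hh) (lt_irrefl w)
      have h3 : w < lam.parts w := (hdur w).mp hwd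
      have h4 := hc w hwd
      omega
    have hscw : lam.durfee ≤ c + w := by
      rcases Nat.eq_or_lt_of_le hwle with h | h
      · omega
      · have h1 := haw h
        have h3 := hmono_a w (lam.durfee - 1) (by omega) (by omega)
        have h4 : lam.durfee - 1 < lam.parts (lam.durfee - 1) := (hdur _).mp (by omega)
        omega
    have hpj : lam.conjParts (c + w) = w := by
      apply lam.conjParts_eq
      intro i
      constructor
      · intro hpi
        by_contra hiw
        push_neg at hiw
        have his : i < lam.durfee := by
          by_contra hins
          have := hps i (by omega)
          omega
        have h1 := haw (by omega)
        have h3 := hmono_a w i hiw his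
        have h4 : i < lam.parts i := (hdur i).mp his
        omega
      · intro hiw
        have hwm := (hSiff (w - 1)).mpr (by omega)
        have hw1s : w - 1 < lam.durfee := (hdur _).mpr hwm.1
        have h3 := hmono_a i (w - 1) (by omega) hw1s
        have h5 := hwm.2
        omega
    have hpcw : lam.parts (c + w) = w := by
      rw [← hsc (c + w)]
      exact hpj
    exact ⟨c + w, hscw, by omega⟩
  -- realizing small hook values in a given row
  have hmake : ∀ i y, i < lam.durfee → 1 ≤ y → y < lam.parts i - i →
      (∀ k, k < lam.durfee → lam.parts k - k ≠ lam.parts i - i - y) →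
      ∃ j, lam.IsCell i j ∧ lam.hook i j = y := by
    intro i y his hy1 hy2 hnA
    have hpi : i < lam.parts i := (hdur i).mp his
    obtain ⟨j, hjs, hjc⟩ := hmiss (lam.parts i - i - 1 - y) (by
      intro k hk
      have := hnA k hk
      omega)
    have hcell : j < lam.parts i := by
      by_contra hcon
      push_neg at hcon
      have h1 : ¬ i < lam.parts j := by
        intro hh
        exact absurd ((hrel i j).mpr hh) (by omega)
      omega
    refine ⟨j, hcell, ?_⟩
    have h2 := hookgen i j hcell
    omega
  constructor
  · rintro ⟨-, hct, hct1, hdist⟩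
    have hat : ∀ i, i < lam.durfee → lam.parts i - i ≤ t := by
      intro i his
      by_contra hcon
      push_neg at hcon
      have hpi : i < lam.parts i := (hdur i).mp his
      have hkA : ∃ k, k < lam.durfee ∧ lam.parts k - k = lam.parts i - i - t := by
        by_contra hno
        push_neg at hno
        obtain ⟨j, hcell, hhook⟩ := hmake i t his ht (by omega) (fun k hk => hno k hk)
        exact hct i j hcell ⟨1, by omega⟩
      obtain ⟨k, hks, hak⟩ := hkA
      have hpk : k < lam.parts k := (hdur k).mp hks
      rcases Nat.lt_or_ge (lam.parts i - i) (t + 2) with hsmall | hbig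
      · -- parts i - i = t + 1, so parts k - k = 1; hook (i,k) = t + 1
        have hkcell : k < lam.parts i := by
          have := hges i his
          omega
        have hh := hookgen i k hkcell
        have hval : lam.hook i k = t + 1 := by omega
        exact hct1 i k hkcell ⟨1, by omega⟩
      · have hlA : ∃ l, l < lam.durfee ∧
            lam.parts l - l = lam.parts i - i - (t + 1) := by
          by_contra hno
          push_neg at hno
          obtain ⟨j, hcell, hhook⟩ :=
            hmake i (t + 1) his (by omega) (by omega) (fun l hl => hno l hl)
          exact hct1 i j hcell ⟨1, by omega⟩
        obtain ⟨l, hls, hal⟩ := hlA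
        have hpl : l < lam.parts l := (hdur l).mp hls
        have hkl : k < l := by
          by_contra hcon2
          push_neg at hcon2
          have := hmono_a l k hcon2 hks
          omega
        have hchain2 := hmono_a k l (le_of_lt hkl) hls
        have hpeq : lam.parts k = lam.parts l := by omega
        exact hdist k l hks hls (by omega) hpeq
    refine ⟨?_, ?_, ?_⟩
    · rintro h ⟨i, his, rfl⟩
      have hpi := (hdur i).mp his
      have hd := hdiag i his
      have hiat := hat i his
      exact ⟨⟨lam.parts i - i - 1, by omega⟩, by omega,
        fun hht => hct i i hpi ⟨1, by omega⟩,
        fun hht1 => hct1 i i hpi ⟨1, by omega⟩⟩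
    · rintro h₁ ⟨i, his, rfl⟩ h₂ ⟨j, hjs, rfl⟩ hlt
      have hdi := hdiag i his
      have hdj := hdiag j hjs
      have hpi := (hdur i).mp his
      have hpj := (hdur j).mp hjs
      have hij : i < j := by
        by_contra hcon
        push_neg at hcon
        have := hmono_a j i hcon his
        omega
      have h3 := hmono_a i j (le_of_lt hij) hjs
      have hne := hdist i j his hjs (by omega)
      omega
    · rintro h₁ ⟨i, his, rfl⟩ h₂ ⟨j, hjs, rfl⟩
      have hdi := hdiag i his
      have hdj := hdiag j hjs
      have hpi := (hdur i).mp his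
      have hpj := (hdur j).mp hjs
      have hcell : j < lam.parts i := by
        have := hges i his
        omega
      have hh := hookgen i j hcell
      constructor
      · intro hsum
        exact hct i j hcell ⟨1, by omega⟩
      · intro hsum
        exact hct1 i j hcell ⟨1, by omega⟩
  · rintro ⟨hsub, hgap, hsum⟩
    have hat : ∀ i, i < lam.durfee → lam.parts i - i ≤ t := by
      intro i his
      have hmem := hsub (hMDmem i his)
      have hd := hdiag i his
      have hpi := (hdur i).mp his
      have h1 := hmem.2.1
      omega
    have hsum' : ∀ i j, i < lam.durfee → j < lam.durfee →
        (lam.parts i - i) + (lam.parts j - j) ≠ t + 1 ∧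
        (lam.parts i - i) + (lam.parts j - j) ≠ t + 2 := by
      intro i j his hjs
      have h1 := hsum _ (hMDmem i his) _ (hMDmem j hjs)
      have hdi := hdiag i his
      have hdj := hdiag j hjs
      have hpi := (hdur i).mp his
      have hpj := (hdur j).mp hjs
      omega
    have hnodvd : ∀ u : ℕ, (u = t ∨ u = t + 1) →
        ∀ i j, lam.IsCell i j → ¬ u ∣ lam.hook i j := by
      intro u hu i j hcell hdvd
      have hut : t ≤ u := by rcases hu with rfl | rfl <;> omega
      have hcj : j < lam.parts i := hcell
      have hh := hookgen i j hcj
      have hji : i < lam.parts j := (hrel i j).mp hcj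
      have hpos : 1 ≤ lam.hook i j := by omega
      rcases Nat.lt_or_ge i lam.durfee with his | his
      · rcases Nat.lt_or_ge j lam.durfee with hjs | hjs
        · have hai := hat i his
          have haj := hat j hjs
          have hpi := (hdur i).mp his
          have hpj := (hdur j).mp hjs
          have hs' := hsum' i j his hjs
          obtain ⟨m, hm⟩ := hdvd
          rcases m with _ | _ | m
          · omega
          · rcases hu with rfl | rfl
            · have := hs'.1
              omega
            · have := hs'.2
              omega
          · have hexp : u * (m + 1 + 1) = u * m + 2 * u := by ring
            omega
        · have hai := hat i his
          have hpsj := hps j hjs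
          have hule : u ≤ lam.hook i j := Nat.le_of_dvd hpos hdvd
          omega
      · have hpsi := hps i his
        have hjs : j < lam.durfee := by omega
        have haj := hat j hjs
        have hule : u ≤ lam.hook i j := Nat.le_of_dvd hpos hdvd
        omega
    have hstep : ∀ k, k + 1 < lam.durfee → lam.parts (k + 1) < lam.parts k := by
      intro k hk
      have h1 := hmono_a k (k + 1) (by omega) hk
      have hpk : k < lam.parts k := (hdur k).mp (by omega)
      have hpk1 : k + 1 < lam.parts (k + 1) := (hdur (k + 1)).mp hk
      have hd1 := hdiag k (by omega)
      have hd2 := hdiag (k + 1) hk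
      have hg := hgap _ (hMDmem k (by omega)) _ (hMDmem (k + 1) hk) (by omega)
      omega
    have hmono : ∀ k d, k + d < lam.durfee → 1 ≤ d →
        lam.parts (k + d) < lam.parts k := by
      intro k d
      induction d with
      | zero => intro _ h1; omega
      | succ d ih =>
        intro h _
        rcases Nat.eq_zero_or_pos d with rfl | hd
        · show lam.parts (k + 1) < lam.parts k
          exact hstep k (by omega)
        · have h2 := ih (by omega) hd
          have h3 := hstep (k + d) (by omega)
          show lam.parts (k + d + 1) < lam.parts k
          omega
    refine ⟨hsc, fun i j hc => hnodvd t (Or.inl rfl) i j hc,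
      fun i j hc => hnodvd (t + 1) (Or.inr rfl) i j hc, ?_⟩
    intro i j his hjs hne
    rcases Nat.lt_or_ge i j with h | h
    · have hm := hmono i (j - i) (by omega) (by omega)
      have hji : i + (j - i) = j := by omega
      rw [hji] at hm
      omega
    · have h' : j < i := by omega
      have hm := hmono j (i - j) (by omega) (by omega)
      have hij' : j + (i - j) = i := by omega
      rw [hij'] at hm
      omega
end
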